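/- arXiv:2204.01052 — 3 statements merged into one kernel-verified Lean document; each statement's English description precedes it below -/
import Mathlib

section
/- Let Q ∈ ℂ^{n×n} be Hermitian positive definite, x ∈ ℂ^n, α = xᴴQx (a nonnegative real), and t = Qx/√(1+α). Then Tr[Q²] − Tr[((Q⁻¹ + xxᴴ)⁻¹)²] = 2 tᴴQt − ‖t‖⁴, where tᴴQt is a nonnegative real number. -/
open Matrix
open scoped ComplexOrder

/-- squared Euclidean norm of a complex vector -/
noncomputable def nsq {n : ℕ} (v : Fin n → ℂ) : ℝ := ∑ i, Complex.normSq (v i)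

private lemma mul_vmv {n : ℕ} (A : Matrix (Fin n) (Fin n) ℂ) (b c : Fin n → ℂ) :
    A * vecMulVec b c = vecMulVec (A *ᵥ b) c := by
  ext i j
  simp [Matrix.mul_apply, vecMulVec_apply, Matrix.mulVec, dotProduct,
    Finset.sum_mul, mul_assoc]

private lemma vmv_mul {n : ℕ} (A : Matrix (Fin n) (Fin n) ℂ) (b c : Fin n → ℂ) :
    vecMulVec b c * A = vecMulVec b (c ᵥ* A) := by
  ext i j
  simp [Matrix.mul_apply, vecMulVec_apply, Matrix.vecMul, dotProduct,
    Finset.mul_sum, mul_assoc]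

private lemma trace_vmv {n : ℕ} (a b : Fin n → ℂ) :
    Matrix.trace (vecMulVec a b) = a ⬝ᵥ b := by
  simp [Matrix.trace, Matrix.diag, vecMulVec_apply, dotProduct]

private lemma vmv_mul_vmv {n : ℕ} (a b c d : Fin n → ℂ) :
    vecMulVec a b * vecMulVec c d = (b ⬝ᵥ c) • vecMulVec a d := by
  ext i j
  simp [Matrix.mul_apply, vecMulVec_apply, dotProduct, Finset.sum_mul, Finset.mul_sum]
  congr 1; ext k; ring

/-- for Hermitian positive definite `Q`, `x ∈ ℂⁿ`, `α = xᴴQx`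
(a nonnegative real) and `t = Qx/√(1+α)`,
`Tr[Q²] − Tr[((Q⁻¹ + xxᴴ)⁻¹)²] = 2 tᴴQt − ‖t‖⁴`, where `tᴴQt` is a
nonnegative real number. -/
theorem trace_sq_reduction_rank_one
    (n : ℕ) (Q : Matrix (Fin n) (Fin n) ℂ) (hQ : Q.PosDef) (x : Fin n → ℂ)
    (α : ℝ) (hα : (α : ℂ) = star x ⬝ᵥ Q *ᵥ x) (hα0 : 0 ≤ α)
    (t : Fin n → ℂ) (ht : t = ((Real.sqrt (1 + α) : ℝ) : ℂ)⁻¹ • (Q *ᵥ x)) :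
    ((star t ⬝ᵥ Q *ᵥ t).im = 0 ∧ 0 ≤ (star t ⬝ᵥ Q *ᵥ t).re) ∧
    Matrix.trace (Q * Q)
        - Matrix.trace
            ((Q⁻¹ + vecMulVec x (star x))⁻¹ * (Q⁻¹ + vecMulVec x (star x))⁻¹)
      = 2 * (star t ⬝ᵥ Q *ᵥ t) - ((nsq t : ℝ) : ℂ) ^ 2 := by
  -- positivity facts
  have him : (star t ⬝ᵥ Q *ᵥ t).im = 0 := by
    have hst : star (star t ⬝ᵥ Q *ᵥ t) = star t ⬝ᵥ Q *ᵥ t := by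
      conv_lhs => rw [Matrix.star_dotProduct, star_star]
      rw [Matrix.star_mulVec, hQ.isHermitian.eq, ← Matrix.dotProduct_mulVec]
    exact Complex.conj_eq_iff_im.mp hst
  have hre : 0 ≤ (star t ⬝ᵥ Q *ᵥ t).re := hQ.posSemidef.re_dotProduct_nonneg t
  refine ⟨⟨him, hre⟩, ?_⟩
  -- notation
  set u : Fin n → ℂ := Q *ᵥ x with hu
  have hβpos : (0 : ℝ) < 1 + α := by linarith
  set β : ℂ := ((1 + α : ℝ) : ℂ) with hβdef
  have hβne : β ≠ 0 := by
    simpa [hβdef] using Complex.ofReal_ne_zero.mpr hβpos.ne'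
  have hβ : β = 1 + (α : ℂ) := by rw [hβdef]; push_cast; ring
  have hc : ((Real.sqrt (1 + α) : ℝ) : ℂ) * ((Real.sqrt (1 + α) : ℝ) : ℂ) = β := by
    rw [hβdef, ← Complex.ofReal_mul, Real.mul_self_sqrt hβpos.le]
  have hcne : ((Real.sqrt (1 + α) : ℝ) : ℂ) ≠ 0 := by
    intro h; rw [h, zero_mul] at hc; exact hβne hc.symm
  have hsu : star u = star x ᵥ* Q := by
    rw [hu, Matrix.star_mulVec, hQ.isHermitian.eq]
  have hdet : IsUnit Q.det := isUnit_iff_ne_zero.mpr hQ.det_pos.ne'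
  have hQQi : Q * Q⁻¹ = 1 := Matrix.mul_nonsing_inv Q hdet
  have hdotα : star u ⬝ᵥ x = (α : ℂ) := by
    rw [hsu, ← Matrix.dotProduct_mulVec, ← hα]
  -- Sherman–Morrison
  have h2 : star u ᵥ* Q⁻¹ = star x := by
    rw [hsu, Matrix.vecMul_vecMul, hQQi, Matrix.vecMul_one]
  have hinv : (Q⁻¹ + vecMulVec x (star x))⁻¹ = Q - β⁻¹ • vecMulVec u (star u) := by
    apply Matrix.inv_eq_left_inv
    rw [Matrix.sub_mul, Matrix.mul_add, Matrix.mul_add, hQQi, mul_vmv,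
      Matrix.smul_mul, vmv_mul, h2, Matrix.smul_mul, vmv_mul_vmv, hdotα, smul_smul]
    have hco : vecMulVec u (star x) - β⁻¹ • vecMulVec u (star x)
        - (β⁻¹ * (α : ℂ)) • vecMulVec u (star x)
        = ((1 : ℂ) - β⁻¹ - β⁻¹ * (α : ℂ)) • vecMulVec u (star x) := by
      rw [sub_smul, sub_smul, one_smul]
    have hzero : (1 : ℂ) - β⁻¹ - β⁻¹ * (α : ℂ) = 0 := by
      field_simp [hβ]
      rw [hβ]; ring
    have : (1 : Matrix (Fin n) (Fin n) ℂ) + vecMulVec u (star x)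
        - (β⁻¹ • vecMulVec u (star x) + (β⁻¹ * (α : ℂ)) • vecMulVec u (star x)) = 1 := by
      rw [add_sub_assoc, ← sub_sub, hco, hzero, zero_smul, add_zero]
    linear_combination (norm := skip) this
    abel
  -- scalar values
  set γ : ℂ := star u ⬝ᵥ Q *ᵥ u with hγ
  set δ : ℂ := star u ⬝ᵥ u with hδ
  have hstart : star t = ((Real.sqrt (1 + α) : ℝ) : ℂ)⁻¹ • star u := by
    rw [ht, star_smul, star_inv₀]
    congr 1
    simp [Complex.star_def, Complex.conj_ofReal]
  have hinv2 : ((Real.sqrt (1 + α) : ℝ) : ℂ)⁻¹ * ((Real.sqrt (1 + α) : ℝ) : ℂ)⁻¹ = β⁻¹ := by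
    rw [← mul_inv, hc]
  have htQt : star t ⬝ᵥ Q *ᵥ t = β⁻¹ * γ := by
    rw [hstart, ht, Matrix.mulVec_smul, smul_dotProduct, dotProduct_smul,
      smul_eq_mul, smul_eq_mul, ← mul_assoc, hinv2, hγ]
  have hnsq : ((nsq t : ℝ) : ℂ) = β⁻¹ * δ := by
    have h1 : ((nsq t : ℝ) : ℂ) = star t ⬝ᵥ t := by
      rw [nsq, Complex.ofReal_sum]
      simp [dotProduct, Complex.normSq_eq_conj_mul_self, Complex.star_def]
    rw [h1, hstart, ht, smul_dotProduct, dotProduct_smul,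
      smul_eq_mul, smul_eq_mul, ← mul_assoc, hinv2, hδ]
  -- trace computation
  have htr1 : Matrix.trace (Q * vecMulVec u (star u)) = γ := by
    rw [mul_vmv, trace_vmv, dotProduct_comm, hγ]
  have htr2 : Matrix.trace (vecMulVec u (star u) * Q) = γ := by
    rw [vmv_mul, trace_vmv, dotProduct_comm, ← Matrix.dotProduct_mulVec, hγ]
  have htr3 : Matrix.trace (vecMulVec u (star u) * vecMulVec u (star u)) = δ * δ := by
    rw [vmv_mul_vmv, Matrix.trace_smul, trace_vmv, smul_eq_mul,
      dotProduct_comm u (star u)]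
  have hBB : Matrix.trace ((Q - β⁻¹ • vecMulVec u (star u))
      * (Q - β⁻¹ • vecMulVec u (star u)))
      = Matrix.trace (Q * Q) - β⁻¹ * γ - β⁻¹ * γ + β⁻¹ * β⁻¹ * (δ * δ) := by
    rw [Matrix.sub_mul, Matrix.mul_sub, Matrix.mul_sub, Matrix.trace_sub,
      Matrix.trace_sub, Matrix.trace_sub, Matrix.mul_smul, Matrix.smul_mul,
      Matrix.mul_smul, Matrix.smul_mul, smul_smul,
      Matrix.trace_smul, Matrix.trace_smul, Matrix.trace_smul,
      htr1, htr2, htr3]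
    simp only [smul_eq_mul]
    ring
  rw [hinv, hBB, htQt, hnsq]
  ring
end

section
/- In the Δ-setup, the difference of the training-mismatch trace terms satisfies Tr[Q D Dᴴ Q] − Tr[Q₁ D₁ D₁ᴴ Q₁] = ‖t‖²(‖v‖² − ‖e − u + v‖²). -/
open Matrix
open scoped ComplexOrder

section Aux
variable {n : ℕ}

lemma nsq_cast (x : Fin n → ℂ) : ((nsq x : ℝ) : ℂ) = star x ⬝ᵥ x := by
  simp only [nsq, dotProduct, Pi.star_apply, Complex.ofReal_sum]
  refine Finset.sum_congr rfl fun i _ => ?_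
  rw [Complex.normSq_eq_conj_mul_self]
  rfl

lemma mul_vecMulVec' (M : Matrix (Fin n) (Fin n) ℂ) (a b : Fin n → ℂ) :
    M * vecMulVec a b = vecMulVec (M *ᵥ a) b := by
  ext i j
  simp [Matrix.mul_apply, Matrix.vecMulVec_apply, Matrix.mulVec, dotProduct,
    Finset.sum_mul, mul_assoc]

lemma vecMulVec_mul' (M : Matrix (Fin n) (Fin n) ℂ) (a b : Fin n → ℂ) :
    vecMulVec a b * M = vecMulVec a (b ᵥ* M) := by
  ext i j
  simp [Matrix.mul_apply, Matrix.vecMulVec_apply, Matrix.vecMul, dotProduct,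
    Finset.mul_sum, mul_assoc, mul_comm, mul_left_comm]

lemma trace_vecMulVec' (a b : Fin n → ℂ) : Matrix.trace (vecMulVec a b) = a ⬝ᵥ b := by
  simp [Matrix.trace, Matrix.vecMulVec_apply, Matrix.diag, dotProduct]

lemma conjTranspose_vecMulVec (a b : Fin n → ℂ) :
    (vecMulVec a b)ᴴ = vecMulVec (star b) (star a) := by
  ext i j
  simp [Matrix.conjTranspose_apply, Matrix.vecMulVec_apply, mul_comm]

lemma vecMulVec_mulVec' (a b x : Fin n → ℂ) :
    vecMulVec a b *ᵥ x = (b ⬝ᵥ x) • a := by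
  ext i
  simp [Matrix.mulVec, Matrix.vecMulVec_apply, dotProduct, Finset.mul_sum, mul_assoc,
    mul_comm, mul_left_comm]

lemma vecMulVec_smul_right (c : ℂ) (a b : Fin n → ℂ) :
    vecMulVec a (c • b) = vecMulVec (c • a) b := by
  ext i j
  simp [Matrix.vecMulVec_apply, mul_comm, mul_left_comm]

lemma vecMulVec_sub_left (a a' b : Fin n → ℂ) :
    vecMulVec (a - a') b = vecMulVec a b - vecMulVec a' b := by
  ext i j
  simp [Matrix.vecMulVec_apply, sub_mul]

end Aux

/-- in the Δ-setup, the difference of the training-mismatch trace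
terms satisfies `Tr[Q D Dᴴ Q] − Tr[Q₁ D₁ D₁ᴴ Q₁] = ‖t‖²(‖v‖² − ‖e − u + v‖²)`. -/
theorem delta_mismatch_term
    (N L : ℕ) (σ : ℝ) (hσ : 0 < σ)
    (Xhat X : Matrix (Fin N) (Fin L) ℂ)
    (xh xt : Fin N → ℂ) (hxh : xh ≠ 0)
    (Q D Q₁ D₁ : Matrix (Fin N) (Fin N) ℂ)
    (hQ : Q = (Xhat * Xhatᴴ + ((σ : ℂ) ^ 2) • 1)⁻¹)
    (hD : D = Xhat * (Xhat - X)ᴴ + ((σ : ℂ) ^ 2) • 1)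
    (α : ℝ) (hα : (α : ℂ) = star xh ⬝ᵥ Q *ᵥ xh)
    (t : Fin N → ℂ) (ht : t = ((Real.sqrt (1 + α) : ℝ) : ℂ)⁻¹ • (Q *ᵥ xh))
    (hQ₁ : Q₁ = Q - vecMulVec t (star t))
    (hD₁ : D₁ = D + vecMulVec xh (star (xh - xt)))
    (e u v : Fin N → ℂ)
    (he : e = ((Real.sqrt (1 + α) : ℝ) : ℂ)⁻¹ • (xh - xt))
    (hu : u = Dᴴ *ᵥ t)
    (hv : v = ((nsq t : ℝ) : ℂ)⁻¹ • (Dᴴ *ᵥ (Q *ᵥ t))) :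
    Matrix.trace (Q * D * Dᴴ * Q) - Matrix.trace (Q₁ * D₁ * D₁ᴴ * Q₁)
      = ((nsq t * (nsq v - nsq (e - u + v)) : ℝ) : ℂ) := by
  -- positive definiteness of Q
  have hone : (((σ : ℂ) ^ 2) • (1 : Matrix (Fin N) (Fin N) ℂ)).PosDef := by
    rw [Matrix.smul_one_eq_diagonal]
    refine Matrix.posDef_diagonal_iff.mpr fun i => ?_
    have : ((σ : ℂ) ^ 2) = ((σ ^ 2 : ℝ) : ℂ) := by push_cast; ring
    rw [this]
    exact_mod_cast (by positivity : (0:ℝ) < σ ^ 2)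
  have hMpd : (Xhat * Xhatᴴ + ((σ : ℂ) ^ 2) • 1).PosDef :=
    Matrix.PosDef.posSemidef_add (Matrix.posSemidef_self_mul_conjTranspose Xhat) hone
  have hQpd : Q.PosDef := hQ ▸ hMpd.inv
  have hQH : Qᴴ = Q := hQpd.isHermitian
  -- basic scalars
  have hαposC : (0:ℂ) < (α : ℂ) := by rw [hα]; exact hQpd.dotProduct_mulVec_pos hxh
  have hαpos : 0 < α := by exact_mod_cast hαposC
  have h1α : (0:ℝ) < 1 + α := by linarith
  set c : ℂ := ((Real.sqrt (1 + α) : ℝ) : ℂ) with hc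
  have hcne : c ≠ 0 := by
    simp only [hc, ne_eq, Complex.ofReal_eq_zero]
    exact ne_of_gt (Real.sqrt_pos.mpr h1α)
  have hcstar : star c = c := by simp [hc]
  have hc2 : c * c = 1 + (α : ℂ) := by
    rw [hc, ← Complex.ofReal_mul, Real.mul_self_sqrt h1α.le]
    push_cast; ring
  have hQx : Q *ᵥ xh = c • t := by
    rw [ht, smul_smul, mul_inv_cancel₀ hcne, one_smul]
  have htne : t ≠ 0 := by
    intro h
    have h0 : (α : ℂ) = 0 := by rw [hα, hQx, h, smul_zero, dotProduct_zero]
    exact absurd (by exact_mod_cast h0 : α = 0) (ne_of_gt hαpos)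
  have hτpos : 0 < nsq t := by
    rcases Function.ne_iff.mp htne with ⟨i, hi⟩
    have : 0 < Complex.normSq (t i) := by
      simpa [Complex.normSq_pos] using hi
    exact lt_of_lt_of_le this
      (Finset.single_le_sum (f := fun i => Complex.normSq (t i))
        (fun j _ => Complex.normSq_nonneg _) (Finset.mem_univ i))
  set τ : ℂ := ((nsq t : ℝ) : ℂ) with hτ
  have hτne : τ ≠ 0 := by
    simp only [hτ, ne_eq, Complex.ofReal_eq_zero]
    exact ne_of_gt hτpos
  have hτstar : star τ = τ := by simp [hτ]
  have hvτ : Dᴴ *ᵥ (Q *ᵥ t) = τ • v := by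
    rw [hv, smul_smul, mul_inv_cancel₀ hτne, one_smul]
  -- tᴴ xh = α / c
  have hdot : star t ⬝ᵥ xh = (α : ℂ) * c⁻¹ := by
    have h1 : star xh ⬝ᵥ t = c⁻¹ * (α : ℂ) := by
      rw [ht, dotProduct_smul, ← hα]
      simp [smul_eq_mul]
    have h2 : star t ⬝ᵥ xh = star (star xh ⬝ᵥ t) := star_dotProduct _ _
    rw [h2, h1, star_mul', star_inv₀]
    simp [hc, Complex.conj_ofReal, mul_comm]
  -- Q₁ xh = c⁻¹ • t
  have hQ1x : Q₁ *ᵥ xh = c⁻¹ • t := by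
    rw [hQ₁, Matrix.sub_mulVec, hQx, vecMulVec_mulVec', hdot]
    rw [← sub_smul]
    congr 1
    field_simp
    linear_combination hc2
  have hQ1H : Q₁ᴴ = Q₁ := by
    rw [hQ₁, Matrix.conjTranspose_sub, hQH, _root_.conjTranspose_vecMulVec]
    simp
  -- key matrix identity
  set w : Fin N → ℂ := e - u with hw
  have hB : D₁ᴴ * Q₁ = Dᴴ * Q + vecMulVec w (star t) := by
    have hD₁H : D₁ᴴ = Dᴴ + vecMulVec (xh - xt) (star xh) := by
      rw [hD₁, Matrix.conjTranspose_add, _root_.conjTranspose_vecMulVec]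
      simp
    have hxQ1 : star xh ᵥ* Q₁ = c⁻¹ • star t := by
      have h4 : star xh ᵥ* Q₁ = star (Q₁ *ᵥ xh) := by
        rw [Matrix.star_mulVec, hQ1H]
      rw [h4, hQ1x, star_smul, star_inv₀, hcstar]
    have he' : c⁻¹ • (xh - xt) = e := by rw [he]
    rw [hD₁H, Matrix.add_mul, vecMulVec_mul', hxQ1, vecMulVec_smul_right, he',
      hQ₁, Matrix.mul_sub, mul_vecMulVec', ← hu, hw, vecMulVec_sub_left]
    abel
  -- rewrite traces
  set A : Matrix (Fin N) (Fin N) ℂ := Dᴴ * Q with hA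
  set C : Matrix (Fin N) (Fin N) ℂ := vecMulVec w (star t) with hC
  have hAH : Aᴴ = Q * D := by rw [hA, Matrix.conjTranspose_mul, hQH, Matrix.conjTranspose_conjTranspose]
  have hL1 : Q * D * Dᴴ * Q = Aᴴ * A := by
    rw [hAH, hA]; simp only [Matrix.mul_assoc]
  have hL2 : Q₁ * D₁ * D₁ᴴ * Q₁ = (D₁ᴴ * Q₁)ᴴ * (D₁ᴴ * Q₁) := by
    rw [Matrix.conjTranspose_mul, hQ1H, Matrix.conjTranspose_conjTranspose]
    simp only [Matrix.mul_assoc]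
  -- scalar values of the cross traces
  have htrAC : Matrix.trace (Aᴴ * C) = τ * (star v ⬝ᵥ w) := by
    rw [hAH, hC, mul_vecMulVec', trace_vecMulVec', dotProduct_comm]
    rw [Matrix.dotProduct_mulVec]
    have h3 : star t ᵥ* (Q * D) = star ((Q * D)ᴴ *ᵥ t) := by
      rw [Matrix.star_mulVec, Matrix.conjTranspose_conjTranspose]
    rw [h3, Matrix.conjTranspose_mul, hQH, ← Matrix.mulVec_mulVec, hvτ, star_smul,
      hτstar, smul_dotProduct, smul_eq_mul]
  have htrCA : Matrix.trace (Cᴴ * A) = τ * (star w ⬝ᵥ v) := by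
    have hCA : Cᴴ * A = (Aᴴ * C)ᴴ := by
      rw [Matrix.conjTranspose_mul, Matrix.conjTranspose_conjTranspose]
    rw [hCA, Matrix.trace_conjTranspose, htrAC, star_mul', hτstar, ← star_dotProduct]
  have htrCC : Matrix.trace (Cᴴ * C) = (star w ⬝ᵥ w) * τ := by
    rw [hC, _root_.conjTranspose_vecMulVec, star_star, vecMulVec_mul']
    rw [trace_vecMulVec']
    have : star w ᵥ* vecMulVec w (star t) = (star w ⬝ᵥ w) • star t := by
      ext j
      simp [Matrix.vecMul, Matrix.vecMulVec_apply, dotProduct, Finset.sum_mul,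
        Finset.mul_sum, mul_comm, mul_left_comm]
    rw [this, dotProduct_smul, smul_eq_mul, hτ, nsq_cast, dotProduct_comm t (star t)]
  -- final computation
  rw [hL1, hL2, hB]
  rw [show ((Dᴴ * Q : Matrix (Fin N) (Fin N) ℂ) + vecMulVec w (star t)) = A + C from rfl]
  rw [Matrix.conjTranspose_add, Matrix.add_mul, Matrix.mul_add, Matrix.mul_add,
    Matrix.trace_add, Matrix.trace_add, Matrix.trace_add, htrAC, htrCA, htrCC]
  have hwv : e - u + v = w + v := by rw [hw]
  rw [hwv]
  push_cast
  rw [show ((nsq t : ℝ) : ℂ) = τ from rfl, nsq_cast, nsq_cast]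
  have hexp : star (w + v) ⬝ᵥ (w + v)
      = star w ⬝ᵥ w + star w ⬝ᵥ v + star v ⬝ᵥ w + star v ⬝ᵥ v := by
    simp [star_add, add_dotProduct, dotProduct_add]
    ring
  rw [hexp]
  ring
end

section
/- (Theorem 1, deterministic core.) Fix σ > 0, matrices X̂₀, X₀ ∈ ℂ^{N_tx×L₀}, a current detected/expected symbol pair x̂₀, x̃₀ ∈ ℂ^{N_tx} with x̂₀ ≠ 0, future symbol pairs x̂_l, x̃_l ∈ ℂ^{N_tx} for l = 1,…,m, APP values θ₁,…,θ_N ∈ [0,1] with N ≤ m, and a fixed rollout suffix a^r ∈ {0,1}^{m−N}. For a ∈ {0,1} and b ∈ {0,1}^m, let X̂(a,b) be X̂₀ augmented with the column x̂₀ if a = 1 and with the columns x̂_l for every l with b_l = 1, and let X(a,b) be X₀ augmented (in the same positions) with x̃₀ if a = 1 and with x̃_l for every l with b_l = 1. Define Q(a,b) = (X̂(a,b)X̂(a,b)ᴴ + σ²I_{N_tx})⁻¹, D(a,b) = X̂(a,b)(X̂(a,b) − X(a,b))ᴴ + σ²I_{N_tx}, the error-covariance expression C(a,b) = σ²Q(a,b)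 − σ⁴Q(a,b)² + Q(a,b)D(a,b)D(a,b)ᴴQ(a,b), and the weights ω(a^t) = ∏_{l=1}^{N} θ_l^{a^t_l}(1−θ_l)^{1−a^t_l} for a^t ∈ {0,1}^N. For b ∈ {0,1}^m, writing Q = Q(0,b), D = D(0,b), α = x̂₀ᴴQx̂₀, t = Qx̂₀/√(1+α), e = (x̂₀−x̃₀)/√(1+α), u = Dᴴt, v = DᴴQt/‖t‖², β = tᴴQt/‖t‖², define Δ(b) = ‖t‖²( σ² + σ⁴(‖t‖² − 2β) + ‖v‖² − ‖e − u + v‖² ). Then Σ_{a^t∈{0,1}^N} ω(a^t) ( Tr C(0,[a^t,a^r]) − Tr C(1,[a^t,a^r]) ) = Σ_{a^t∈{0,1}^N} ω(a^t) Δ([a^t,a^r]); consequently, the MSE-minimizing binary action a* = argmin_{a∈{0,1}} Σ_{a^t} ω(a^t) Tr C(a,[a^t,a^r]) equals 1 if and only if Σ_{a^t∈{0,1}^N} ω(a^t) Δ([a^t,a^r]) ≥ 0. -/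
open Matrix
open scoped ComplexOrder

/-- Augmentation of the matrix `X0` with the extra column `x0` (present iff
`a = true`, zero otherwise) and the extra columns `xs l` (present iff
`b l = true`, zero otherwise); a column that is set to zero in both the
detected and the true augmented matrices is equivalent to an absent column in
all the products `X̂X̂ᴴ`, `X̂(X̂−X)ᴴ` appearing below. -/
noncomputable def aug {Ntx L₀ : ℕ} {ι : Type*}
    (X0 : Matrix (Fin Ntx) (Fin L₀) ℂ) (x0 : Fin Ntx → ℂ) (xs : ι → Fin Ntx → ℂ)
    (a : Bool) (b : ι → Bool) :
    Matrix (Fin Ntx) (Fin L₀ ⊕ (Unit ⊕ ι)) ℂ :=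
  Matrix.of fun i j =>
    Sum.elim (fun j₀ => X0 i j₀)
      (Sum.elim (fun _ => if a then x0 i else 0)
        (fun l => if b l then xs l i else 0)) j

set_option linter.unusedSectionVars false
set_option maxHeartbeats 1000000

namespace ThmAux

variable {l m n : Type*} [Fintype l] [Fintype m] [Fintype n]

lemma mul_vecMulVec (M : Matrix l m ℂ) (u : m → ℂ) (v : n → ℂ) :
    M * vecMulVec u v = vecMulVec (M *ᵥ u) v := by
  ext i j
  simp [Matrix.mul_apply, vecMulVec_apply, Matrix.mulVec, dotProduct,
    Finset.sum_mul, mul_assoc]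

lemma vecMulVec_mul (u : l → ℂ) (v : m → ℂ) (M : Matrix m n ℂ) :
    vecMulVec u v * M = vecMulVec u (v ᵥ* M) := by
  ext i j
  simp [Matrix.mul_apply, vecMulVec_apply, Matrix.vecMul, dotProduct,
    Finset.mul_sum, mul_assoc]

lemma vecMulVec_mul_vecMulVec (u : l → ℂ) (v : m → ℂ) (w : m → ℂ) (z : n → ℂ) :
    vecMulVec u v * vecMulVec w z = (v ⬝ᵥ w) • vecMulVec u z := by
  ext i j
  simp [Matrix.mul_apply, vecMulVec_apply, dotProduct, Finset.sum_mul,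
    Finset.mul_sum]
  ring_nf
  congr 1
  ext k
  ring

lemma trace_vecMulVec (u v : n → ℂ) : trace (vecMulVec u v) = v ⬝ᵥ u := by
  simp [Matrix.trace, vecMulVec_apply, dotProduct, mul_comm, Matrix.diag]

lemma conjTranspose_vecMulVec (u : m → ℂ) (v : n → ℂ) :
    (vecMulVec u v)ᴴ = vecMulVec (star v) (star u) := by
  ext i j
  simp [vecMulVec_apply, conjTranspose_apply, mul_comm]

lemma vecMulVec_smul_left (c : ℂ) (u : m → ℂ) (v : n → ℂ) :
    vecMulVec (c • u) v = c • vecMulVec u v := by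
  ext i j; simp [vecMulVec_apply, mul_assoc]

lemma vecMulVec_smul_right (c : ℂ) (u : m → ℂ) (v : n → ℂ) :
    vecMulVec u (c • v) = c • vecMulVec u v := by
  ext i j; simp [vecMulVec_apply]; ring

lemma vecMulVec_sub_right (u : m → ℂ) (v w : n → ℂ) :
    vecMulVec u (v - w) = vecMulVec u v - vecMulVec u w := by
  ext i j; simp [vecMulVec_apply]; ring

lemma dot_star_mulVec (M : Matrix m n ℂ) (x : n → ℂ) (y : m → ℂ) :
    star (M *ᵥ x) ⬝ᵥ y = star x ⬝ᵥ Mᴴ *ᵥ y := by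
  rw [Matrix.star_mulVec, ← dotProduct_mulVec]

lemma star_dot_mulVec (M : Matrix m n ℂ) (x : m → ℂ) (y : n → ℂ) :
    star (star x ⬝ᵥ M *ᵥ y) = star y ⬝ᵥ Mᴴ *ᵥ x := by
  rw [star_dotProduct, star_star, dot_star_mulVec]

lemma nsq_cast {k : ℕ} (x : Fin k → ℂ) : ((nsq x : ℝ) : ℂ) = star x ⬝ᵥ x := by
  simp [nsq, dotProduct, Complex.normSq_eq_conj_mul_self]

lemma nsq_pos {k : ℕ} {x : Fin k → ℂ} (hx : x ≠ 0) : 0 < nsq x := by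
  have h : ∃ i, x i ≠ 0 := by
    by_contra h
    push_neg at h
    exact hx (funext fun i => h i)
  obtain ⟨i, hi⟩ := h
  refine Finset.sum_pos' (fun j _ => Complex.normSq_nonneg _) ⟨i, Finset.mem_univ i, ?_⟩
  simpa [Complex.normSq_pos] using hi

variable {Ntx L₀ : ℕ} {ι : Type*} [Fintype ι]

lemma aug_mul_conjTranspose_true (Xhat0 : Matrix (Fin Ntx) (Fin L₀) ℂ)
    (xh0 : Fin Ntx → ℂ) (xh : ι → Fin Ntx → ℂ) (b : ι → Bool) :
    aug Xhat0 xh0 xh true b * (aug Xhat0 xh0 xh true b)ᴴ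
      = aug Xhat0 xh0 xh false b * (aug Xhat0 xh0 xh false b)ᴴ
        + vecMulVec xh0 (star xh0) := by
  ext i j
  simp [aug, Matrix.mul_apply, Matrix.conjTranspose_apply, Fintype.sum_sum_type,
    vecMulVec_apply, mul_comm]
  ring

lemma aug_mul_sub_conjTranspose_true (Xhat0 X0 : Matrix (Fin Ntx) (Fin L₀) ℂ)
    (xh0 xt0 : Fin Ntx → ℂ) (xh xt : ι → Fin Ntx → ℂ) (b : ι → Bool) :
    aug Xhat0 xh0 xh true b * (aug Xhat0 xh0 xh true b - aug X0 xt0 xt true b)ᴴ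
      = aug Xhat0 xh0 xh false b * (aug Xhat0 xh0 xh false b - aug X0 xt0 xt false b)ᴴ
        + vecMulVec xh0 (star (xh0 - xt0)) := by
  ext i j
  simp [aug, Matrix.mul_apply, Matrix.conjTranspose_apply, Fintype.sum_sum_type,
    vecMulVec_apply, Matrix.sub_apply, mul_comm, Pi.sub_apply, map_sub]
  ring

lemma key
    (σ : ℝ) (hσ : 0 < σ)
    (Xhat0 X0 : Matrix (Fin Ntx) (Fin L₀) ℂ)
    (xh0 xt0 : Fin Ntx → ℂ) (hxh0 : xh0 ≠ 0)
    (xh xt : ι → Fin Ntx → ℂ) (b : ι → Bool)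
    (Qf Qt Df Dt Cf Ct : Matrix (Fin Ntx) (Fin Ntx) ℂ)
    (hQf : Qf = (aug Xhat0 xh0 xh false b * (aug Xhat0 xh0 xh false b)ᴴ
      + ((σ : ℂ) ^ 2) • 1)⁻¹)
    (hQt : Qt = (aug Xhat0 xh0 xh true b * (aug Xhat0 xh0 xh true b)ᴴ
      + ((σ : ℂ) ^ 2) • 1)⁻¹)
    (hDf : Df = aug Xhat0 xh0 xh false b
      * (aug Xhat0 xh0 xh false b - aug X0 xt0 xt false b)ᴴ + ((σ : ℂ) ^ 2) • 1)
    (hDt : Dt = aug Xhat0 xh0 xh true b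
      * (aug Xhat0 xh0 xh true b - aug X0 xt0 xt true b)ᴴ + ((σ : ℂ) ^ 2) • 1)
    (hCf : Cf = ((σ : ℂ) ^ 2) • Qf - ((σ : ℂ) ^ 4) • (Qf * Qf) + Qf * Df * Dfᴴ * Qf)
    (hCt : Ct = ((σ : ℂ) ^ 2) • Qt - ((σ : ℂ) ^ 4) • (Qt * Qt) + Qt * Dt * Dtᴴ * Qt)
    (α : ℝ) (hα : α = (star xh0 ⬝ᵥ Qf *ᵥ xh0).re)
    (t e u v : Fin Ntx → ℂ)
    (ht : t = ((Real.sqrt (1 + α) : ℝ) : ℂ)⁻¹ • (Qf *ᵥ xh0))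
    (he : e = ((Real.sqrt (1 + α) : ℝ) : ℂ)⁻¹ • (xh0 - xt0))
    (hu : u = Dfᴴ *ᵥ t)
    (hv : v = ((nsq t : ℝ) : ℂ)⁻¹ • (Dfᴴ *ᵥ (Qf *ᵥ t)))
    (β : ℝ) (hβ : β = (star t ⬝ᵥ Qf *ᵥ t).re / nsq t) :
    trace Cf - trace Ct =
      ((nsq t * (σ ^ 2 + σ ^ 4 * (nsq t - 2 * β) + nsq v - nsq (e - u + v)) : ℝ) : ℂ) := by
  classical
  set A := aug Xhat0 xh0 xh false b with hA
  set S : Matrix (Fin Ntx) (Fin Ntx) ℂ := A * Aᴴ + ((σ : ℂ) ^ 2) • 1 with hS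
  have hone : (((σ : ℂ) ^ 2) • (1 : Matrix (Fin Ntx) (Fin Ntx) ℂ))
      = diagonal (fun _ => ((σ ^ 2 : ℝ) : ℂ)) := by
    ext i j
    by_cases h : i = j <;> simp [Matrix.one_apply, diagonal, h]
  have hσpos : (0 : ℂ) < ((σ ^ 2 : ℝ) : ℂ) := by
    rw [Complex.zero_lt_real]; positivity
  have hSpd : S.PosDef := by
    rw [hS, hone]
    exact Matrix.PosDef.posSemidef_add (Matrix.posSemidef_self_mul_conjTranspose A)
      (Matrix.posDef_diagonal_iff.mpr fun _ => hσpos)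
  have hSunit : IsUnit S.det := (Matrix.isUnit_iff_isUnit_det S).mp hSpd.isUnit
  have hQfS : Qf = S⁻¹ := hQf
  have hQpd : Qf.PosDef := by rw [hQfS]; exact hSpd.inv
  have hQherm : Qfᴴ = Qf := hQpd.isHermitian
  have hSQ : S * Qf = 1 := by rw [hQfS]; exact Matrix.mul_nonsing_inv S hSunit
  -- the quadratic form value d = α (a positive real)
  set d : ℂ := star xh0 ⬝ᵥ Qf *ᵥ xh0 with hdd
  have hdpos : 0 < d := hQpd.dotProduct_mulVec_pos hxh0
  have hdre : 0 < d.re ∧ (0 : ℂ).im = d.im := by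
    rw [Complex.lt_def] at hdpos; exact ⟨hdpos.1, hdpos.2⟩
  have hαd : ((α : ℝ) : ℂ) = d := by
    rw [hα]
    exact Complex.ext rfl (by simpa using hdre.2)
  have hdstar : star d = d := by
    rw [← hαd]; exact Complex.conj_ofReal α
  set c : ℝ := Real.sqrt (1 + α) with hcdef
  have hαpos : 0 < α := by rw [hα]; exact hdre.1
  have hspos : (0 : ℝ) < 1 + α := by linarith
  have hc0 : c ≠ 0 := by positivity
  have hcc : ((c : ℂ)) ^ 2 = 1 + ((α : ℝ) : ℂ) := by
    have h1 : c ^ 2 = 1 + α := Real.sq_sqrt hspos.le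
    exact_mod_cast congrArg (fun r : ℝ => (r : ℂ)) h1
  have hccx : ((c : ℂ)) ≠ 0 := by exact_mod_cast hc0
  -- t facts
  have hQx : Qf *ᵥ xh0 = (c : ℂ) • t := by
    rw [ht, smul_smul, mul_inv_cancel₀ hccx, one_smul]
  have hQxne : Qf *ᵥ xh0 ≠ 0 := by
    intro h
    apply hxh0
    have h2 : S *ᵥ (Qf *ᵥ xh0) = xh0 := by
      rw [Matrix.mulVec_mulVec, hSQ, Matrix.one_mulVec]
    rw [h, Matrix.mulVec_zero] at h2
    exact h2.symm
  have ht0 : t ≠ 0 := by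
    rw [ht]
    exact smul_ne_zero (inv_ne_zero hccx) hQxne
  have hnst : nsq t ≠ 0 := (nsq_pos ht0).ne'
  have hSt : S *ᵥ t = (c : ℂ)⁻¹ • xh0 := by
    rw [ht, Matrix.mulVec_smul, Matrix.mulVec_mulVec, hSQ, Matrix.one_mulVec]
  have hxt : star xh0 ⬝ᵥ t = (c : ℂ)⁻¹ * d := by
    rw [ht, dotProduct_smul, hdd]; simp [smul_eq_mul]
  have hstarQ : star xh0 ᵥ* Qf = (c : ℂ) • star t := by
    have h1 : star (Qf *ᵥ xh0) = star xh0 ᵥ* Qfᴴ := Matrix.star_mulVec Qf xh0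
    rw [hQherm] at h1
    rw [← h1, hQx, star_smul]
    simp
  have htx : star t ⬝ᵥ xh0 = (c : ℂ)⁻¹ * d := by
    rw [star_dotProduct, hxt, star_mul', hdstar]
    simp
  set P : Matrix (Fin Ntx) (Fin Ntx) ℂ := vecMulVec xh0 (star xh0) with hP
  set T : Matrix (Fin Ntx) (Fin Ntx) ℂ := vecMulVec t (star t) with hT
  set V : Matrix (Fin Ntx) (Fin Ntx) ℂ := vecMulVec xh0 (star t) with hV
  have hcoef : (c : ℂ) - (c : ℂ)⁻¹ * d - (c : ℂ)⁻¹ = 0 := by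
    rw [← hαd]
    field_simp
    linear_combination hcc
  have hSP : (S + P) * (Qf - T) = 1 := by
    have h1 : S * T = (c : ℂ)⁻¹ • V := by
      rw [hT, mul_vecMulVec, hSt, vecMulVec_smul_left, hV]
    have h2 : P * Qf = (c : ℂ) • V := by
      rw [hP, vecMulVec_mul, hstarQ, vecMulVec_smul_right, hV]
    have h3 : P * T = ((c : ℂ)⁻¹ * d) • V := by
      rw [hP, hT, vecMulVec_mul_vecMulVec, hxt, hV]
    rw [add_mul, mul_sub, mul_sub, hSQ, h1, h2, h3]
    calc 1 - (c : ℂ)⁻¹ • V + ((c : ℂ) • V - ((c : ℂ)⁻¹ * d) • V)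
        = 1 + ((c : ℂ) - (c : ℂ)⁻¹ * d - (c : ℂ)⁻¹) • V := by
          rw [sub_smul, sub_smul]; abel
      _ = 1 := by rw [hcoef, zero_smul, add_zero]
  have hQt' : Qt = Qf - T := by
    rw [hQt, aug_mul_conjTranspose_true]
    have h4 : A * Aᴴ + P + ((σ : ℂ) ^ 2) • 1 = S + P := by rw [hS]; abel
    rw [← hP, ← hA, h4]
    exact inv_eq_right_inv hSP
  set ex : Fin Ntx → ℂ := xh0 - xt0 with hex
  have hDt' : Dt = Df + vecMulVec xh0 (star ex) := by
    rw [hDt, aug_mul_sub_conjTranspose_true, hDf, ← hA, hex]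
    abel
  set w : Fin Ntx → ℂ := e - u with hw
  have hstar_e : star e = (c : ℂ)⁻¹ • star ex := by
    rw [he, hex, star_smul]
    simp
  have hQD : Qt * Dt = Qf * Df + vecMulVec t (star w) := by
    have h1 : Qf * vecMulVec xh0 (star ex) = (c : ℂ) • vecMulVec t (star ex) := by
      rw [mul_vecMulVec, hQx, vecMulVec_smul_left]
    have h2 : T * Df = vecMulVec t (star u) := by
      rw [hT, vecMulVec_mul]
      congr 1
      rw [hu, Matrix.star_mulVec, conjTranspose_conjTranspose]
    have h3 : T * vecMulVec xh0 (star ex) = ((c : ℂ)⁻¹ * d) • vecMulVec t (star ex) := by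
      rw [hT, vecMulVec_mul_vecMulVec, htx]
    have h5 : vecMulVec t (star w) = (c : ℂ)⁻¹ • vecMulVec t (star ex) - vecMulVec t (star u) := by
      rw [hw, star_sub, vecMulVec_sub_right, hstar_e, vecMulVec_smul_right]
    rw [hQt', hDt', sub_mul, mul_add, mul_add, h1, h2, h3, h5]
    have h6 : (c : ℂ) • vecMulVec t (star ex)
        = (c : ℂ)⁻¹ • vecMulVec t (star ex)
          + ((c : ℂ)⁻¹ * d) • vecMulVec t (star ex) := by
      rw [← add_smul]
      congr 1
      linear_combination hcoef
    rw [h6]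
    abel
  -- Hermitian facts
  have hTherm : Tᴴ = T := by rw [hT, conjTranspose_vecMulVec, star_star]
  have hQtherm : Qtᴴ = Qt := by rw [hQt', conjTranspose_sub, hQherm, hTherm]
  -- scalar quantities
  set nst : ℂ := star t ⬝ᵥ t with hnstdef
  set q : ℂ := star t ⬝ᵥ Qf *ᵥ t with hqdef
  set M : Matrix (Fin Ntx) (Fin Ntx) ℂ := Qf * Df with hM
  set γ : ℂ := star t ⬝ᵥ M *ᵥ w with hγ
  have htrT : trace T = nst := by rw [hT, trace_vecMulVec, hnstdef]
  have htrQT : trace (Qf * T) = q := by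
    rw [hT, mul_vecMulVec, trace_vecMulVec, hqdef]
  have htrTQ : trace (T * Qf) = q := by rw [Matrix.trace_mul_comm, htrQT]
  have htrTT : trace (T * T) = nst * nst := by
    rw [hT, vecMulVec_mul_vecMulVec, trace_smul, trace_vecMulVec, smul_eq_mul, hnstdef]
  have h3f : Qf * Df * Dfᴴ * Qf = M * Mᴴ := by
    rw [hM, conjTranspose_mul, hQherm, Matrix.mul_assoc (Qf * Df)]
  have h3t : Qt * Dt * Dtᴴ * Qt = (Qt * Dt) * (Qt * Dt)ᴴ := by
    rw [conjTranspose_mul, hQtherm, Matrix.mul_assoc (Qt * Dt)]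
  have hWH : (vecMulVec t (star w))ᴴ = vecMulVec w (star t) := by
    rw [conjTranspose_vecMulVec, star_star]
  have htr_MW : trace (M * (vecMulVec t (star w))ᴴ) = γ := by
    rw [hWH, mul_vecMulVec, trace_vecMulVec, hγ]
  have htr_WM : trace (vecMulVec t (star w) * Mᴴ) = star γ := by
    rw [Matrix.trace_mul_comm, mul_vecMulVec, trace_vecMulVec, hγ, star_dot_mulVec]
  have htr_WW : trace (vecMulVec t (star w) * (vecMulVec t (star w))ᴴ)
      = (star w ⬝ᵥ w) * nst := by
    rw [hWH, vecMulVec_mul_vecMulVec, trace_smul, trace_vecMulVec, smul_eq_mul, hnstdef]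
  have htr3 : trace (Qt * Dt * Dtᴴ * Qt)
      = trace (Qf * Df * Dfᴴ * Qf) + γ + star γ + (star w ⬝ᵥ w) * nst := by
    rw [h3t, h3f, hQD, conjTranspose_add, add_mul, mul_add, mul_add, trace_add,
      trace_add, trace_add, htr_MW, htr_WM, htr_WW]
    ring
  -- q is a (positive) real
  have hqstar : star q = q := by rw [hqdef, star_dot_mulVec, hQherm]
  have hqim : q.im = 0 := by
    have h7 := hqstar
    rw [Complex.star_def] at h7
    exact Complex.conj_eq_iff_im.mp h7
  have hqre : ((q.re : ℝ) : ℂ) = q := Complex.ext (by simp) (by simp [hqim])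
  have hnst_cast : ((nsq t : ℝ) : ℂ) = nst := by rw [nsq_cast, hnstdef]
  have hnst0 : nst ≠ 0 := by
    rw [← hnst_cast]
    exact_mod_cast hnst
  have hnststar : star nst = nst := by rw [← hnst_cast]; exact Complex.conj_ofReal _
  -- γ in terms of v
  have hvw : star v ⬝ᵥ w = ((nsq t : ℝ) : ℂ)⁻¹ * γ := by
    rw [hv, star_smul, smul_dotProduct, smul_eq_mul]
    congr 1
    · simp
    · rw [dot_star_mulVec, conjTranspose_conjTranspose, dot_star_mulVec, hQherm,
        Matrix.mulVec_mulVec, hγ, hM]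
  have hwv : star w ⬝ᵥ v = ((nsq t : ℝ) : ℂ)⁻¹ * star γ := by
    rw [star_dotProduct, hvw, star_mul']
    congr 1
    simp
  have hnsq_wv : ((nsq (e - u + v) : ℝ) : ℂ)
      = (star w ⬝ᵥ w) + star w ⬝ᵥ v + star v ⬝ᵥ w + ((nsq v : ℝ) : ℂ) := by
    have h8 : e - u + v = w + v := by rw [hw]
    rw [h8, nsq_cast, nsq_cast, star_add, add_dotProduct, dotProduct_add, dotProduct_add]
    ring
  -- trace of the two first pieces
  have htrQt : trace Qt = trace Qf - nst := by rw [hQt', trace_sub, htrT]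
  have htrQtQt : trace (Qt * Qt) = trace (Qf * Qf) - (2 * q - nst * nst) := by
    rw [hQt', sub_mul, mul_sub, mul_sub, trace_sub, trace_sub, trace_sub, htrQT,
      htrTQ, htrTT]
    ring
  -- β fact
  have hβc : ((β : ℝ) : ℂ) * nst = q := by
    have h9 : β * nsq t = q.re := by
      rw [hβ]
      field_simp
    rw [← hnst_cast, ← hqre]
    exact_mod_cast congrArg (fun r : ℝ => (r : ℂ)) h9
  have hinv : nst * nst⁻¹ = 1 := mul_inv_cancel₀ hnst0
  -- final assembly
  rw [hCf, hCt, trace_add, trace_sub, trace_smul, trace_smul, trace_add, trace_sub,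
    trace_smul, trace_smul, htrQt, htrQtQt, htr3, smul_eq_mul, smul_eq_mul,
    smul_eq_mul, smul_eq_mul]
  push_cast
  rw [hnsq_wv, hwv, hvw, nsq_cast v, hnst_cast]
  linear_combination (2 * (σ : ℂ) ^ 4) * hβc + (γ + star γ) * hinv

end ThmAux


/-- Theorem 1, deterministic core: the APP-weighted average of
the trace reduction of the error-covariance expression `C` over all tree-policy
action sequences equals the weighted average of the closed-form quantity `Δ`;
consequently, the MSE-minimizing binary action equals `1` iff
`Σ_{aᵗ} ω(aᵗ) Δ([aᵗ,aʳ]) ≥ 0`.  Future time slots are indexed by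
`Fin N ⊕ Fin r` (the `N` tree-policy slots and the `m − N = r` rollout slots),
and `Sum.elim aᵗ aʳ` is the concatenation `[aᵗ, aʳ]`. -/
theorem theorem_one_core
    (Ntx L₀ N r : ℕ) (σ : ℝ) (hσ : 0 < σ)
    (Xhat0 X0 : Matrix (Fin Ntx) (Fin L₀) ℂ)
    (xh0 xt0 : Fin Ntx → ℂ) (hxh0 : xh0 ≠ 0)
    (xh xt : (Fin N ⊕ Fin r) → Fin Ntx → ℂ)
    (θ : Fin N → ℝ) (hθ : ∀ l, θ l ∈ Set.Icc (0 : ℝ) 1)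
    (ar : Fin r → Bool)
    (Q D C : Bool → ((Fin N ⊕ Fin r) → Bool) → Matrix (Fin Ntx) (Fin Ntx) ℂ)
    (hQ : ∀ a b, Q a b = ((aug Xhat0 xh0 xh a b) * (aug Xhat0 xh0 xh a b)ᴴ
      + ((σ : ℂ) ^ 2) • 1)⁻¹)
    (hD : ∀ a b, D a b = (aug Xhat0 xh0 xh a b)
      * ((aug Xhat0 xh0 xh a b) - (aug X0 xt0 xt a b))ᴴ + ((σ : ℂ) ^ 2) • 1)
    (hC : ∀ a b, C a b = ((σ : ℂ) ^ 2) • Q a b - ((σ : ℂ) ^ 4) • (Q a b * Q a b)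
      + Q a b * D a b * (D a b)ᴴ * Q a b)
    (ω : (Fin N → Bool) → ℝ)
    (hω : ∀ a_t, ω a_t = ∏ l, if a_t l then θ l else 1 - θ l)
    (Δ : ((Fin N ⊕ Fin r) → Bool) → ℝ)
    (hΔ : ∀ b, Δ b =
      let Q0 := Q false b
      let D0 := D false b
      let α : ℝ := (star xh0 ⬝ᵥ Q0 *ᵥ xh0).re
      let t : Fin Ntx → ℂ := ((Real.sqrt (1 + α) : ℝ) : ℂ)⁻¹ • (Q0 *ᵥ xh0)
      let e : Fin Ntx → ℂ := ((Real.sqrt (1 + α) : ℝ) : ℂ)⁻¹ • (xh0 - xt0)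
      let u : Fin Ntx → ℂ := D0ᴴ *ᵥ t
      let v : Fin Ntx → ℂ := ((nsq t : ℝ) : ℂ)⁻¹ • (D0ᴴ *ᵥ (Q0 *ᵥ t))
      let β : ℝ := (star t ⬝ᵥ Q0 *ᵥ t).re / nsq t
      nsq t * (σ ^ 2 + σ ^ 4 * (nsq t - 2 * β) + nsq v - nsq (e - u + v))) :
    (∑ a_t : Fin N → Bool, ((ω a_t : ℝ) : ℂ) *
          (Matrix.trace (C false (Sum.elim a_t ar))
            - Matrix.trace (C true (Sum.elim a_t ar)))
        = ∑ a_t : Fin N → Bool, ((ω a_t : ℝ) : ℂ) * ((Δ (Sum.elim a_t ar) : ℝ) : ℂ)) ∧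
    ((∑ a_t : Fin N → Bool, ω a_t * (Matrix.trace (C true (Sum.elim a_t ar))).re
        ≤ ∑ a_t : Fin N → Bool, ω a_t * (Matrix.trace (C false (Sum.elim a_t ar))).re)
      ↔ 0 ≤ ∑ a_t : Fin N → Bool, ω a_t * Δ (Sum.elim a_t ar)) := by
  have hkey : ∀ (a_t : Fin N → Bool),
      Matrix.trace (C false (Sum.elim a_t ar)) - Matrix.trace (C true (Sum.elim a_t ar))
        = ((Δ (Sum.elim a_t ar) : ℝ) : ℂ) := by
    intro a_t
    rw [hΔ (Sum.elim a_t ar)]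
    exact ThmAux.key σ hσ Xhat0 X0 xh0 xt0 hxh0 xh xt (Sum.elim a_t ar)
      (Q false _) (Q true _) (D false _) (D true _) (C false _) (C true _)
      (hQ false _) (hQ true _) (hD false _) (hD true _) (hC false _) (hC true _)
      _ rfl _ _ _ _ rfl rfl rfl rfl _ rfl
  have hre : ∀ (a_t : Fin N → Bool),
      (Matrix.trace (C false (Sum.elim a_t ar))).re
        - (Matrix.trace (C true (Sum.elim a_t ar))).re = Δ (Sum.elim a_t ar) := by
    intro a_t
    have h := congrArg Complex.re (hkey a_t)
    simpa using h
  constructor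
  · exact Finset.sum_congr rfl fun a_t _ => by rw [hkey a_t]
  · have hsum : ∑ a_t : Fin N → Bool, ω a_t * (Matrix.trace (C false (Sum.elim a_t ar))).re
        - ∑ a_t : Fin N → Bool, ω a_t * (Matrix.trace (C true (Sum.elim a_t ar))).re
        = ∑ a_t : Fin N → Bool, ω a_t * Δ (Sum.elim a_t ar) := by
      rw [← Finset.sum_sub_distrib]
      exact Finset.sum_congr rfl fun a_t _ => by rw [← mul_sub, hre]
    rw [← sub_nonneg, hsum]
end
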